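/- In the setting of the decomposition ψ = ν + ω with ν(u,v) = F(u) + G(v) constructed from a bounded mean-zero solution ψ of ψ_uv = -ψ/(4(u+v)²): the function F'(u) := lim_{v→∞} ψ_u(u,v) is 2π-periodic and has zero mean over any period: ∫_{u₀}^{u₀+2π} F'(u) du = 0. -/

import Mathlib

open Real Set Filter

/-- Partial derivative in the first null coordinate `u`. -/
noncomputable def pu (f : ℝ → ℝ → ℝ) : ℝ → ℝ → ℝ := fun u v => deriv (fun u' => f u' v) u

/-- A sequence bounded above whose consecutive differences converge to `A` forces `A ≤ 0`. -/
lemma aux_tendsto_diff_nonpos {φ : ℕ → ℝ} {C A : ℝ} (hb : ∀ n, φ n ≤ C)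
    (h : Tendsto (fun n => φ (n + 1) - φ n) atTop (nhds A)) : A ≤ 0 := by
  by_contra hA
  push_neg at hA
  obtain ⟨N, hN⟩ := eventually_atTop.1 (h.eventually (eventually_ge_nhds (by linarith : A / 2 < A)))
  have key : ∀ k : ℕ, φ N + k * (A / 2) ≤ φ (N + k) := by
    intro k
    induction k with
    | zero => simp
    | succ k ih =>
      have h1 := hN (N + k) (Nat.le_add_right _ _)
      have h2 : (N + (k + 1)) = (N + k) + 1 := by ring
      rw [h2]
      push_cast
      push_cast at ih
      linarith
  obtain ⟨k, hk⟩ := exists_nat_gt ((C - φ N) / (A / 2))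
  have h1 := key k
  have h2 := hb (N + k)
  have h3 : (C - φ N) < k * (A / 2) := by
    have := (div_lt_iff₀ (by linarith : (0:ℝ) < A / 2)).1 hk
    linarith
  linarith

/-- In null coordinates, for a bounded, spatially periodic, mean-zero solution of
`ψ_uv = -ψ/(4(u+v)²)`, the limit function `F'(u) = lim_{v→∞} ψ_u(u,v)` is 2π-periodic
with zero mean over any period. -/
theorem Fprime_periodic_mean_zero
    (ψ : ℝ → ℝ → ℝ) (C : ℝ)
    (hC2 : ContDiff ℝ 2 (fun p : ℝ × ℝ => ψ p.1 p.2))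
    (hper : ∀ u v : ℝ, ψ (u + 2 * π) (v - 2 * π) = ψ u v)
    (hbd : ∀ u v : ℝ, 0 < u + v → |ψ u v| ≤ C)
    (heq : ∀ u v : ℝ, 0 < u + v →
      deriv (fun v' => pu ψ u v') v = -ψ u v / (4 * (u + v) ^ 2))
    (hmean : ∀ t : ℝ, 0 < t → ∫ x in (0:ℝ)..(2 * π), ψ (t + x) (t - x) = 0)
    (F' : ℝ → ℝ)
    (hF' : ∀ u : ℝ, Tendsto (fun v => pu ψ u v) atTop (nhds (F' u))) :
    (∀ u : ℝ, F' (u + 2 * π) = F' u) ∧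
    ∀ u₀ : ℝ, ∫ u in u₀..(u₀ + 2 * π), F' u = 0 := by
  have hC0 : 0 ≤ C := le_trans (abs_nonneg _) (hbd 1 1 (by norm_num))
  set Ψ : ℝ × ℝ → ℝ := fun p => ψ p.1 p.2 with hΨ
  have hΨd : Differentiable ℝ Ψ := hC2.differentiable two_ne_zero
  have hΨc : Continuous Ψ := hC2.continuous
  -- pu as an application of the joint fderiv
  have hpu_eq : ∀ u v : ℝ, pu ψ u v = fderiv ℝ Ψ (u, v) (1, 0) := by
    intro u v
    have hcurve : HasDerivAt (fun u' : ℝ => ((u', v) : ℝ × ℝ)) (1, 0) u :=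
      (hasDerivAt_id u).prodMk (hasDerivAt_const u v)
    have h1 : HasDerivAt (fun u' => ψ u' v) (fderiv ℝ Ψ (u, v) (1, 0)) u :=
      by have := (hΨd (u, v)).hasFDerivAt.comp_hasDerivAt u hcurve; exact this
    exact h1.deriv
  have hG : ContDiff ℝ 1 (fun p : ℝ × ℝ => fderiv ℝ Ψ p (1, 0)) := by
    exact (ContinuousLinearMap.apply ℝ ℝ ((1 : ℝ), (0 : ℝ))).contDiff.comp
      (hC2.fderiv_right (by norm_num))
  have hGd : Differentiable ℝ (fun p : ℝ × ℝ => fderiv ℝ Ψ p (1, 0)) :=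
    hG.differentiable one_ne_zero
  have hGc : Continuous (fun p : ℝ × ℝ => fderiv ℝ Ψ p (1, 0)) := hG.continuous
  -- differentiability in v of pu
  have hdiffv : ∀ u v : ℝ, DifferentiableAt ℝ (fun v' => pu ψ u v') v := by
    intro u v
    have h1 : (fun v' => pu ψ u v') = fun v' => fderiv ℝ Ψ (u, v') (1, 0) :=
      funext fun v' => hpu_eq u v'
    rw [h1]
    exact (hGd (u, v)).comp v ((differentiableAt_const u).prodMk differentiableAt_id : DifferentiableAt ℝ (fun v' : ℝ => ((u, v') : ℝ × ℝ)) v)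
  have hHasDeriv : ∀ u v : ℝ, 0 < u + v →
      HasDerivAt (fun v' => pu ψ u v') (-ψ u v / (4 * (u + v) ^ 2)) v := by
    intro u v hv
    have := (hdiffv u v).hasDerivAt
    rwa [heq u v hv] at this
  -- continuity facts
  have hcψ : ∀ u : ℝ, Continuous (fun s => ψ u s) := by
    intro u
    exact hΨc.comp (Continuous.prodMk_right u)
  have hcpu : ∀ v : ℝ, Continuous (fun u => pu ψ u v) := by
    intro v
    have h1 : (fun u => pu ψ u v) = fun u => fderiv ℝ Ψ (u, v) (1, 0) :=
      funext fun u => hpu_eq u v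
    rw [h1]
    exact hGc.comp (continuous_id.prodMk continuous_const)
  -- key Cauchy-type bound
  have hstep : ∀ u v w : ℝ, 0 < u + v → v ≤ w →
      |pu ψ u w - pu ψ u v| ≤ C / (4 * (u + v)) := by
    intro u v w hv hvw
    have hpos : ∀ s ∈ uIcc v w, 0 < u + s := by
      intro s hs
      rw [uIcc_of_le hvw] at hs
      linarith [hs.1]
    have hposI : ∀ s ∈ Icc v w, 0 < u + s := by
      intro s hs; linarith [hs.1]
    have hcont : ContinuousOn (fun s => -ψ u s / (4 * (u + s) ^ 2)) (uIcc v w) := by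
      apply ContinuousOn.div
      · exact ((hcψ u).neg).continuousOn
      · exact (continuous_const.mul ((continuous_const.add continuous_id).pow 2)).continuousOn
      · intro s hs
        have := hpos s hs
        positivity
    have hint : IntervalIntegrable (fun s => -ψ u s / (4 * (u + s) ^ 2))
        MeasureTheory.volume v w := hcont.intervalIntegrable
    have hftc : ∫ s in v..w, -ψ u s / (4 * (u + s) ^ 2) = pu ψ u w - pu ψ u v :=
      intervalIntegral.integral_eq_sub_of_hasDerivAt
        (fun s hs => hHasDeriv u s (hpos s hs)) hint
    -- antiderivative of the dominating function
    have hCder : ∀ s ∈ uIcc v w, HasDerivAt (fun s => -(C / 4) * (u + s)⁻¹)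
        (C / (4 * (u + s) ^ 2)) s := by
      intro s hs
      have hus := hpos s hs
      have h1 : HasDerivAt (fun s : ℝ => u + s) 1 s := (hasDerivAt_id s).const_add u
      have h2 : HasDerivAt (fun s : ℝ => (u + s)⁻¹) (-1 / (u + s) ^ 2) s := h1.inv (by positivity)
      have h3 := h2.const_mul (-(C / 4))
      rw [show C / (4 * (u + s) ^ 2) = -(C / 4) * (-1 / (u + s) ^ 2) by rw [mul_comm (4:ℝ), ← div_div]; ring]
      exact h3
    have hCcont : ContinuousOn (fun s => C / (4 * (u + s) ^ 2)) (uIcc v w) := by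
      apply ContinuousOn.div
      · exact continuousOn_const
      · exact (continuous_const.mul ((continuous_const.add continuous_id).pow 2)).continuousOn
      · intro s hs
        have := hpos s hs
        positivity
    have hCint : IntervalIntegrable (fun s => C / (4 * (u + s) ^ 2))
        MeasureTheory.volume v w := hCcont.intervalIntegrable
    have hCftc : ∫ s in v..w, C / (4 * (u + s) ^ 2)
        = -(C / 4) * (u + w)⁻¹ - -(C / 4) * (u + v)⁻¹ :=
      intervalIntegral.integral_eq_sub_of_hasDerivAt hCder hCint
    have habs : |∫ s in v..w, -ψ u s / (4 * (u + s) ^ 2)|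
        ≤ ∫ s in v..w, C / (4 * (u + s) ^ 2) := by
      refine le_trans (intervalIntegral.abs_integral_le_integral_abs hvw) ?_
      refine intervalIntegral.integral_mono_on hvw hcont.abs.intervalIntegrable hCint ?_
      intro s hs
      have hus := hposI s hs
      have h1 : |(-ψ u s) / (4 * (u + s) ^ 2)| = |ψ u s| / (4 * (u + s) ^ 2) := by
        rw [abs_div, abs_neg, abs_of_pos (by positivity : (0:ℝ) < 4 * (u + s) ^ 2)]
      rw [h1]
      gcongr
      exact hbd u s hus
    have hfinal : ∫ s in v..w, C / (4 * (u + s) ^ 2) ≤ C / (4 * (u + v)) := by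
      rw [hCftc]
      have h1 : 0 < u + v := hv
      have h2 : 0 < u + w := by linarith
      have h3 : 0 ≤ C / 4 * (u + w)⁻¹ := by positivity
      have h4 : -(C / 4) * (u + w)⁻¹ - -(C / 4) * (u + v)⁻¹ = C / 4 * (u + v)⁻¹ - C / 4 * (u + w)⁻¹ := by ring
      rw [h4]
      have h5 : C / 4 * (u + v)⁻¹ = C / (4 * (u + v)) := by
        field_simp
      linarith
    rw [← hftc]
    exact le_trans habs hfinal
  -- uniform bound on pu - F'
  have hbound : ∀ u v : ℝ, 0 < u + v → |pu ψ u v - F' u| ≤ C / (4 * (u + v)) := by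
    intro u v hv
    have h1 : Tendsto (fun w => |pu ψ u w - pu ψ u v|) atTop
        (nhds (|F' u - pu ψ u v|)) := (((hF' u).sub_const _).abs)
    have h2 : ∀ᶠ w in atTop, |pu ψ u w - pu ψ u v| ≤ C / (4 * (u + v)) :=
      eventually_atTop.2 ⟨v, fun w hw => hstep u v w hv hw⟩
    have h3 := le_of_tendsto h1 h2
    rwa [abs_sub_comm] at h3
  -- periodicity of pu
  have hper' : ∀ u v : ℝ, pu ψ (u + 2 * π) v = pu ψ u (v + 2 * π) := by
    intro u v
    have hshift : (fun u' => ψ (u' + 2 * π) v) = fun u' => ψ u' (v + 2 * π) := by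
      funext u'
      have := hper u' (v + 2 * π)
      rwa [add_sub_cancel_right] at this
    show deriv (fun u' => ψ u' v) (u + 2 * π) = deriv (fun u' => ψ u' (v + 2 * π)) u
    rw [← deriv_comp_add_const (fun u' => ψ u' v) (2 * π) u, hshift]
  -- periodicity of F'
  have hperF : ∀ u : ℝ, F' (u + 2 * π) = F' u := by
    intro u
    have h1 : Tendsto (fun v => pu ψ u (v + 2 * π)) atTop (nhds (F' u)) :=
      (hF' u).comp (tendsto_atTop_add_const_right atTop (2 * π) tendsto_id)
    have h2 : Tendsto (fun v => pu ψ (u + 2 * π) v) atTop (nhds (F' u)) := by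
      simpa [hper'] using h1
    exact tendsto_nhds_unique (hF' (u + 2 * π)) h2
  refine ⟨hperF, ?_⟩
  intro u₀
  have hπ : (0:ℝ) < 2 * π := by positivity
  have hle : u₀ ≤ u₀ + 2 * π := by linarith
  -- F' is continuous on the period interval
  have hFc : ContinuousOn F' (Icc u₀ (u₀ + 2 * π)) := by
    apply TendstoUniformlyOn.continuousOn (F := fun v u => pu ψ u v) (p := atTop)
    · rw [Metric.tendstoUniformlyOn_iff]
      intro ε hε
      filter_upwards [eventually_ge_atTop (max (1 - u₀) (C / (4 * ε) + 1 - u₀))] with v hv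
      intro u hu
      have hv1 : 1 - u₀ ≤ v := le_trans (le_max_left _ _) hv
      have hv2 : C / (4 * ε) + 1 - u₀ ≤ v := le_trans (le_max_right _ _) hv
      have hu0 : u₀ ≤ u := hu.1
      have huv : 0 < u + v := by linarith
      have h0v : 0 < u₀ + v := by linarith
      have hb1 := hbound u v huv
      have hb2 : C / (4 * (u + v)) ≤ C / (4 * (u₀ + v)) := by
        gcongr
      have hb3 : C / (4 * (u₀ + v)) < ε := by
        rw [div_lt_iff₀ (by positivity)]
        have : C / (4 * ε) * (4 * ε) = C := by field_simp
        nlinarith [mul_pos (by positivity : (0:ℝ) < 4) hε]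
      have : dist (F' u) (pu ψ u v) = |pu ψ u v - F' u| := by
        rw [Real.dist_eq, abs_sub_comm]
      rw [this]
      linarith
    · exact (Eventually.of_forall fun v => (hcpu v).continuousOn).frequently
  have hFint : IntervalIntegrable F' MeasureTheory.volume u₀ (u₀ + 2 * π) := by
    apply ContinuousOn.intervalIntegrable
    rwa [uIcc_of_le hle]
  set A : ℝ := ∫ u in u₀..(u₀ + 2 * π), F' u with hA
  -- FTC in u
  have hFTCu : ∀ v : ℝ, ∫ u in u₀..(u₀ + 2 * π), pu ψ u v = ψ (u₀ + 2 * π) v - ψ u₀ v := by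
    intro v
    refine intervalIntegral.integral_eq_sub_of_hasDerivAt
      (f := fun u => ψ u v) (f' := fun u => pu ψ u v) ?_ ((hcpu v).intervalIntegrable _ _)
    intro u _
    have hd : DifferentiableAt ℝ (fun u' => ψ u' v) u :=
      by have := (hΨd (u, v)).comp u (differentiableAt_id.prodMk (differentiableAt_const v) : DifferentiableAt ℝ (fun u' : ℝ => ((u', v) : ℝ × ℝ)) u); exact this
    exact hd.hasDerivAt
  have hpuint : ∀ v : ℝ, IntervalIntegrable (fun u => pu ψ u v)
      MeasureTheory.volume u₀ (u₀ + 2 * π) := fun v => (hcpu v).intervalIntegrable _ _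
  -- distance bound
  have hdist : ∀ v : ℝ, 0 < u₀ + v →
      |(ψ (u₀ + 2 * π) v - ψ u₀ v) - A| ≤ C / (4 * (u₀ + v)) * (2 * π) := by
    intro v hv
    have h1 : (ψ (u₀ + 2 * π) v - ψ u₀ v) - A
        = ∫ u in u₀..(u₀ + 2 * π), (pu ψ u v - F' u) := by
      rw [intervalIntegral.integral_sub (hpuint v) hFint, hFTCu v]
    rw [h1]
    have h2 := intervalIntegral.norm_integral_le_of_norm_le_const
      (C := C / (4 * (u₀ + v))) (f := fun u => pu ψ u v - F' u)
      (a := u₀) (b := u₀ + 2 * π) ?_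
    · have h3 : |u₀ + 2 * π - u₀| = 2 * π := by
        rw [abs_of_pos (by linarith : (0:ℝ) < u₀ + 2 * π - u₀)]; ring
      rw [h3] at h2
      exact h2
    · intro x hx
      rw [uIoc_of_le hle] at hx
      have hx0 : u₀ < x := hx.1
      have hxv : 0 < x + v := by linarith
      refine le_trans (hbound x v hxv) ?_
      gcongr
  -- convergence of the increment to A
  have hconv : Tendsto (fun v => ψ u₀ (v + 2 * π) - ψ u₀ v) atTop (nhds A) := by
    have hper2 : ∀ v : ℝ, ψ (u₀ + 2 * π) v = ψ u₀ (v + 2 * π) := by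
      intro v
      have := hper u₀ (v + 2 * π)
      rwa [add_sub_cancel_right] at this
    have hzero : Tendsto (fun v => (ψ (u₀ + 2 * π) v - ψ u₀ v) - A) atTop (nhds 0) := by
      apply squeeze_zero_norm' (a := fun v => C / (4 * (u₀ + v)) * (2 * π))
      · filter_upwards [eventually_gt_atTop (-u₀)] with v hv
        exact hdist v (by linarith)
      · have h4 : (fun v => C / (4 * (u₀ + v)) * (2 * π)) = fun v => (C * (2 * π)) / (4 * (u₀ + v)) := by
          funext v; ring
        rw [h4]
        have hden : Tendsto (fun v : ℝ => 4 * (u₀ + v)) atTop atTop := by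
          have h6 : Tendsto (fun v : ℝ => u₀ + v) atTop atTop :=
            tendsto_atTop_add_const_left atTop u₀ tendsto_id
          exact h6.const_mul_atTop (by norm_num : (0:ℝ) < 4)
        exact Tendsto.div_atTop tendsto_const_nhds hden
    have := hzero.add_const A
    simp only [sub_add_cancel] at this
    rw [zero_add] at this
    have h5 : (fun v => ψ (u₀ + 2 * π) v - ψ u₀ v) = fun v => ψ u₀ (v + 2 * π) - ψ u₀ v := by
      funext v; rw [hper2 v]
    rwa [h5] at this
  -- telescoping sequence
  set φ : ℕ → ℝ := fun n => ψ u₀ (1 - u₀ + 2 * π * n) with hφ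
  have hφbd : ∀ n, |φ n| ≤ C := by
    intro n
    apply hbd
    have : (0:ℝ) ≤ 2 * π * n := by positivity
    linarith
  have hidx : Tendsto (fun n : ℕ => 1 - u₀ + 2 * π * n) atTop atTop := by
    apply tendsto_atTop_add_const_left
    exact Tendsto.const_mul_atTop hπ tendsto_natCast_atTop_atTop
  have hφdiff : Tendsto (fun n => φ (n + 1) - φ n) atTop (nhds A) := by
    have h1 := hconv.comp hidx
    have h2 : (fun n => φ (n + 1) - φ n)
        = (fun v => ψ u₀ (v + 2 * π) - ψ u₀ v) ∘ (fun n : ℕ => 1 - u₀ + 2 * π * n) := by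
      funext n
      simp only [Function.comp, hφ]
      congr 2
      push_cast
      ring
    rwa [h2]
  have hA1 : A ≤ 0 := aux_tendsto_diff_nonpos (fun n => (abs_le.1 (hφbd n)).2) hφdiff
  have hA2 : 0 ≤ A := by
    have hneg : Tendsto (fun n => (-φ (n + 1)) - (-φ n)) atTop (nhds (-A)) := by
      have he : (fun n => (-φ (n + 1)) - (-φ n)) = fun n => -(φ (n + 1) - φ n) := by
        funext n; ring
      rw [he]
      exact hφdiff.neg
    have := aux_tendsto_diff_nonpos (φ := fun n => -φ n) (C := C)
      (fun n => show -φ n ≤ C by linarith [(abs_le.1 (hφbd n)).1]) hneg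
    linarith
  linarith
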